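/- A tensor A in T_{m,n} is a P tensor if and only if for each nonzero x in R^n there exists a positive diagonal n x n matrix D_x such that x^T D_x (A x^{m-1}) > 0. -/
import Mathlib


open Finset

noncomputable section

/-- The contraction `(A x^{m})_i` of an order-`m+1` tensor with `m` copies of `x`. -/
def contrT {m n : ℕ} (A : (Fin (m+1) → Fin n) → ℝ) (x : Fin n → ℝ) (i : Fin n) : ℝ :=
  ∑ f : Fin m → Fin n, A (Fin.cons i f) * ∏ k, x (f k)

/-- `A x^M` for an order-`M` tensor. -/
def polyT {M n : ℕ} (A : (Fin M → Fin n) → ℝ) (x : Fin n → ℝ) : ℝ :=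
  ∑ f : Fin M → Fin n, A f * ∏ k, x (f k)

/-- P tensor: for every nonzero `x`, `max_i x_i (A x^{m-1})_i > 0`. -/
def IsPTensor {m n : ℕ} (A : (Fin (m+1) → Fin n) → ℝ) : Prop :=
  ∀ x : Fin n → ℝ, x ≠ 0 → ∃ i : Fin n, 0 < x i * contrT A x i

/-- P₀ tensor: for every nonzero `x` there is `i` with `x i ≠ 0` and `x_i (A x^{m-1})_i ≥ 0`. -/
def IsP0Tensor {m n : ℕ} (A : (Fin (m+1) → Fin n) → ℝ) : Prop :=
  ∀ x : Fin n → ℝ, x ≠ 0 → ∃ i : Fin n, x i ≠ 0 ∧ 0 ≤ x i * contrT A x i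

def infNorm {n : ℕ} (x : Fin n → ℝ) : ℝ := ⨆ i, |x i|

/-- The operator `T_A(x) = ‖x‖₂^{2-m} A x^{m-1}` (order of the tensor is `m+1`). -/
def TA {m n : ℕ} (A : (Fin (m+1) → Fin n) → ℝ) (x : Fin n → ℝ) (i : Fin n) : ℝ :=
  if x = 0 then 0
  else (Real.sqrt (∑ j, x j ^ 2)) ^ ((2 : ℤ) - ((m : ℤ) + 1)) * contrT A x i

/-- `α(T_A) = min_{‖x‖_∞ = 1} max_i x_i (T_A(x))_i`. -/
def alphaT {m n : ℕ} (A : (Fin (m+1) → Fin n) → ℝ) : ℝ :=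
  sInf ((fun x => ⨆ i, x i * TA A x i) '' {x : Fin n → ℝ | infNorm x = 1})

/-- B tensor of order `m+1`. -/
def IsBTensor {m n : ℕ} (B : (Fin (m+1) → Fin n) → ℝ) : Prop :=
  ∀ i : Fin n, (0 < ∑ f : Fin m → Fin n, B (Fin.cons i f)) ∧
    ∀ g : Fin m → Fin n, g ≠ (fun _ => i) →
      B (Fin.cons i g) < (1 / (n : ℝ) ^ m) * ∑ f : Fin m → Fin n, B (Fin.cons i f)

/-- B₀ tensor of order `m+1`. -/
def IsB0Tensor {m n : ℕ} (B : (Fin (m+1) → Fin n) → ℝ) : Prop :=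
  ∀ i : Fin n, (0 ≤ ∑ f : Fin m → Fin n, B (Fin.cons i f)) ∧
    ∀ g : Fin m → Fin n, g ≠ (fun _ => i) →
      B (Fin.cons i g) ≤ (1 / (n : ℝ) ^ m) * ∑ f : Fin m → Fin n, B (Fin.cons i f)

theorem stmt11 (m n : ℕ) (A : (Fin (m+1) → Fin n) → ℝ) :
    IsPTensor A ↔
      ∀ x : Fin n → ℝ, x ≠ 0 →
        ∃ d : Fin n → ℝ, (∀ i, 0 < d i) ∧
          0 < ∑ i, x i * (d i * contrT A x i) := by
  constructor
  · intro hP x hx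
    obtain ⟨i₀, hi₀⟩ := hP x hx
    set c := x i₀ * contrT A x i₀ with hc
    set S := ∑ j ∈ Finset.univ.erase i₀, x j * contrT A x j with hS
    set ε := c / (2 * (|S| + 1)) with hε
    have hden : 0 < 2 * (|S| + 1) := by positivity
    have hεpos : 0 < ε := div_pos hi₀ hden
    refine ⟨fun j => if j = i₀ then 1 else ε, fun j => ?_, ?_⟩
    · by_cases h : j = i₀ <;> simp [h, hεpos]
    · have hsplit : ∑ i, x i * ((if i = i₀ then (1:ℝ) else ε) * contrT A x i)
          = c + ε * S := by
        rw [← Finset.add_sum_erase Finset.univ (fun i => x i * ((if i = i₀ then (1:ℝ) else ε) * contrT A x i)) (Finset.mem_univ i₀)]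
        simp only [if_pos rfl, one_mul]
        rw [hS, hc, Finset.mul_sum]
        congr 1
        · simp
        · apply Finset.sum_congr rfl
          intro j hj
          rw [if_neg (Finset.mem_erase.mp hj).1]
          ring
      rw [hsplit]
      have h1 : ε * S ≥ -(c/2) := by
        have : ε * |S| ≤ c / 2 := by
          rw [hε, div_mul_eq_mul_div, div_le_div_iff₀ hden (by norm_num)]
          nlinarith [abs_nonneg S, hi₀]
        nlinarith [neg_abs_le S, abs_nonneg S, mul_le_mul_of_nonneg_left (neg_abs_le S) hεpos.le]
      nlinarith [hi₀]
  · intro h x hx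
    obtain ⟨d, hd, hsum⟩ := h x hx
    obtain ⟨i, -, hi⟩ := Finset.exists_lt_of_sum_lt (by simpa using hsum :
      ∑ i : Fin n, (0:ℝ) < ∑ i, x i * (d i * contrT A x i))
    refine ⟨i, ?_⟩
    have := hd i
    nlinarith [hi, hd i]
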